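/- In W = (ℤ/2)^{n−1} ⋊ S_n (type D_n Weyl group, n even, n ≥ 4), let H = {(τ,ρ) : ρ(n)=n and τ=0} ∪ {(τ,ρ) : ρ(n)=i≠n and τ changes exactly the signs at positions i and n}. Then H is a subgroup of W of order n!, and no element (τ,ρ) ∈ W conjugates the subgroup S_n = {(0,ρ)} onto H. -/

import Mathlib

/-!
STATEMENT 18: In `W = (ℤ/2)^{n−1} ⋊ S_n` (the type `D_n` Weyl group of even sign
changes inside `(ℤ/2)^n ⋊ S_n`), with `n` even, `n ≥ 4`, let
`H = {(τ,ρ) : ρ(n) = n ∧ τ = 1} ∪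
     {(τ,ρ) : ρ(n) = i ≠ n ∧ τ changes exactly the signs at positions i and n}`.
Then `H` is a subgroup of `W` of order `n!`, and no element of `W` conjugates the
subgroup `S_n = {(1,ρ)}` onto `H`.
-/

open Pointwise

/-- The sign group `(ℤ/2)^n`, realized multiplicatively as `Fin n → ℤˣ`. -/
abbrev Signs (n : ℕ) := Fin n → ℤˣ

/-- A permutation of `Fin n` acts on `Signs n` by permuting the coordinates. -/
def permAutSigns {n : ℕ} (σ : Equiv.Perm (Fin n)) : MulAut (Signs n) where
  toFun v := v ∘ σ.symm
  invFun v := v ∘ σ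
  left_inv v := by funext i; simp
  right_inv v := by funext i; simp
  map_mul' v w := rfl

/-- The action of `S_n` on `(ℤ/2)^n` permuting coordinates, as a homomorphism. -/
def permHom (n : ℕ) : Equiv.Perm (Fin n) →* MulAut (Signs n) where
  toFun := permAutSigns
  map_one' := MulEquiv.ext fun v => rfl
  map_mul' σ τ := MulEquiv.ext fun v => rfl

/-- The hyperoctahedral group `W(B_n) = (ℤ/2)^n ⋊ S_n`. -/
abbrev WB (n : ℕ) := SemidirectProduct (Signs n) (Equiv.Perm (Fin n)) (permHom n)

/-- `W(B_n)` acts on `M^n` for any additive group `M` (e.g. the torus `(ℝ/ℤ)^n` or the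
Cartan subalgebra `k^n`) by permuting the coordinates and negating some of them. -/
instance WBAction {n : ℕ} {M : Type*} [AddCommGroup M] : MulAction (WB n) (Fin n → M) where
  smul w t := fun i => ((w.left i : ℤ)) • t (w.right⁻¹ i)
  one_smul t := by
    funext i
    show (((1 : WB n).left i : ℤ)) • t ((1 : WB n).right⁻¹ i) = t i
    simp
  mul_smul w w' t := by
    funext i
    show (((w * w').left i : ℤ)) • t ((w * w').right⁻¹ i)
      = ((w.left i : ℤ)) • ((w'.left (w.right⁻¹ i) : ℤ)) • t (w'.right⁻¹ (w.right⁻¹ i))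
    rw [SemidirectProduct.mul_left, SemidirectProduct.mul_right]
    simp [permHom, permAutSigns, mul_inv_rev, Units.val_mul, mul_smul, Equiv.Perm.inv_def]

/-- The product-of-signs character of `W(B_n)`. -/
def signProd (n : ℕ) : WB n →* ℤˣ where
  toFun w := ∏ i, w.left i
  map_one' := by simp
  map_mul' w w' := by
    show (∏ i, (w * w').left i) = _
    rw [SemidirectProduct.mul_left]
    show (∏ i, w.left i * w'.left (w.right.symm i)) = _
    rw [Finset.prod_mul_distrib]
    congr 1
    exact Equiv.prod_comp w.right.symm w'.left

/-- The Weyl group `W(D_n) = (ℤ/2)^{n-1} ⋊ S_n` of even sign changes. -/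
abbrev WD (n : ℕ) : Subgroup (WB n) := (signProd n).ker

/-- The subgroup `S_n ⊂ W(D_n)` of pure permutations (trivial sign change part). -/
def SnInWD (n : ℕ) : Subgroup (WD n) :=
  (SemidirectProduct.inr : Equiv.Perm (Fin n) →* WB n).range.subgroupOf (WD n)


namespace Stmt18
variable {n : ℕ}

/-- The sign vector attached to a permutation. -/
def tauOf (lst : Fin n) (ρ : Equiv.Perm (Fin n)) : Signs n :=
  fun j => (if j = lst then -1 else 1) * (if ρ⁻¹ j = lst then -1 else 1)

/-- The twisted embedding `S_n → W(B_n)`. -/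
def phiB (lst : Fin n) : Equiv.Perm (Fin n) →* WB n where
  toFun ρ := ⟨tauOf lst ρ, ρ⟩
  map_one' := by
    have h : tauOf lst (1 : Equiv.Perm (Fin n)) = 1 := by
      funext j
      simp only [tauOf, inv_one, Equiv.Perm.one_apply, Int.units_mul_self]
      rfl
    apply SemidirectProduct.ext <;> simp [h]
  map_mul' ρ ρ' := by
    have hl : tauOf lst (ρ * ρ') = tauOf lst ρ * (permHom n ρ) (tauOf lst ρ') := by
      funext j
      show tauOf lst (ρ * ρ') j = tauOf lst ρ j * tauOf lst ρ' (ρ⁻¹ j)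
      unfold tauOf
      rw [mul_inv_rev, Equiv.Perm.mul_apply]
      generalize (if j = lst then (-1:ℤˣ) else 1) = A
      generalize (if ρ⁻¹ j = lst then (-1:ℤˣ) else 1) = B
      generalize (if ρ'⁻¹ (ρ⁻¹ j) = lst then (-1:ℤˣ) else 1) = C
      rw [mul_assoc A B (B * C), ← mul_assoc B B C, Int.units_mul_self, one_mul]
    apply SemidirectProduct.ext <;> simp [hl]

@[simp] lemma phiB_left (lst : Fin n) (ρ : Equiv.Perm (Fin n)) :
    (phiB lst ρ).left = tauOf lst ρ := rfl

@[simp] lemma phiB_right (lst : Fin n) (ρ : Equiv.Perm (Fin n)) :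
    (phiB lst ρ).right = ρ := rfl

lemma phiB_mem (lst : Fin n) (ρ : Equiv.Perm (Fin n)) : phiB lst ρ ∈ WD n := by
  show signProd n (phiB lst ρ) = 1
  show (∏ i, tauOf lst ρ i) = 1
  unfold tauOf
  rw [Finset.prod_mul_distrib]
  have h1 : (∏ i, if i = lst then (-1 : ℤˣ) else 1) = -1 := by
    rw [Finset.prod_ite_eq' Finset.univ lst (fun _ => (-1 : ℤˣ))]
    simp
  have h2 : (∏ i, if ρ⁻¹ i = lst then (-1 : ℤˣ) else 1) = -1 := by
    have h : ∀ i : Fin n, (ρ⁻¹ i = lst) = (i = ρ lst) := by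
      intro i
      rw [eq_iff_iff, Equiv.Perm.inv_eq_iff_eq, eq_comm]
    simp_rw [h]
    rw [Finset.prod_ite_eq' Finset.univ (ρ lst) (fun _ => (-1 : ℤˣ))]
    simp
  rw [h1, h2]
  decide

/-- The twisted embedding `S_n → W(D_n)`. -/
def phi (lst : Fin n) : Equiv.Perm (Fin n) →* WD n :=
  (phiB lst).codRestrict (WD n) (phiB_mem lst)

@[simp] lemma phi_coe (lst : Fin n) (ρ : Equiv.Perm (Fin n)) :
    ((phi lst ρ : WD n) : WB n) = phiB lst ρ := rfl

lemma phi_inj (lst : Fin n) : Function.Injective (phi lst) := by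
  intro ρ ρ' h
  have h2 : ((phi lst ρ : WD n) : WB n).right = ((phi lst ρ' : WD n) : WB n).right := by
    rw [h]
  simpa using h2

lemma conj_inr_left (b : WB n) (σ : Equiv.Perm (Fin n)) (j : Fin n) :
    (b * SemidirectProduct.inr σ * b⁻¹).left j
      = b.left j * b.left (b.right (σ⁻¹ (b.right⁻¹ j))) := by
  simp only [SemidirectProduct.mul_left, SemidirectProduct.inv_left,
    SemidirectProduct.mul_right, SemidirectProduct.inv_right, SemidirectProduct.left_inr, SemidirectProduct.right_inr]
  simp [SemidirectProduct.mul_left, SemidirectProduct.inv_left,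
    SemidirectProduct.mul_right, permHom, permAutSigns, mul_inv_rev,
    Equiv.Perm.inv_def, Equiv.Perm.mul_def, Equiv.symm_trans_apply]

lemma mem_SnInWD_iff (k : WD n) : k ∈ SnInWD n ↔ ∃ σ, SemidirectProduct.inr σ = (k : WB n) :=
  Iff.rfl

lemma tauOf_of_fix {lst : Fin n} {ρ : Equiv.Perm (Fin n)} (h : ρ lst = lst) :
    tauOf lst ρ = 1 := by
  funext j
  show tauOf lst ρ j = 1
  unfold tauOf
  simp only [Equiv.Perm.inv_eq_iff_eq, h]
  exact Int.units_mul_self _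

lemma tauOf_of_ne {lst : Fin n} {ρ : Equiv.Perm (Fin n)} (h : ρ lst ≠ lst) :
    tauOf lst ρ = fun j => if j = lst ∨ j = ρ lst then -1 else 1 := by
  funext j
  unfold tauOf
  simp only [Equiv.Perm.inv_eq_iff_eq]
  by_cases h1 : j = lst
  · have h2 : ¬ j = ρ lst := fun hh => h (hh.symm.trans h1)
    rw [if_pos h1, if_neg h2, if_pos (Or.inl h1), mul_one]
  · by_cases h2 : j = ρ lst
    · rw [if_neg h1, if_pos h2, if_pos (Or.inr h2), one_mul]
    · rw [if_neg h1, if_neg h2, if_neg (by tauto), mul_one]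

lemma units_mul_eq_neg_one {u v : ℤˣ} (h : u ≠ v) : u * v = -1 := by
  rcases Int.units_eq_one_or u with h1 | h1 <;> rcases Int.units_eq_one_or v with h2 | h2 <;>
    simp_all

lemma units_inv_self (u : ℤˣ) : u⁻¹ = u := by
  rcases Int.units_eq_one_or u with h1 | h1 <;> simp [h1]

end Stmt18


open Stmt18 in
theorem exists_subgroup_H_not_conjugate_to_Sn (n : ℕ) (hn : 4 ≤ n) (hne : Even n)
    (lst : Fin n) (hlst : (lst : ℕ) = n - 1) :
    ∃ H : Subgroup (WD n),
      (H : Set (WD n)) =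
        {w : WD n |
          ((w : WB n).right lst = lst ∧ (w : WB n).left = 1) ∨
          ((w : WB n).right lst ≠ lst ∧
            (w : WB n).left =
              fun j => if j = lst ∨ j = (w : WB n).right lst then -1 else 1)} ∧
      Nat.card H = n.factorial ∧
      ∀ g : ConjAct (WD n), g • SnInWD n ≠ H := by
  have HcarrierSet : (((phi lst).range : Subgroup (WD n)) : Set (WD n)) =
      {w : WD n |
        ((w : WB n).right lst = lst ∧ (w : WB n).left = 1) ∨
        ((w : WB n).right lst ≠ lst ∧
          (w : WB n).left =
            fun j => if j = lst ∨ j = (w : WB n).right lst then -1 else 1)} := by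
    ext w
    simp only [SetLike.mem_coe, MonoidHom.mem_range, Set.mem_setOf_eq]
    constructor
    · rintro ⟨ρ, rfl⟩
      simp only [phi_coe, phiB_left, phiB_right]
      by_cases hfix : ρ lst = lst
      · exact Or.inl ⟨hfix, tauOf_of_fix hfix⟩
      · exact Or.inr ⟨hfix, tauOf_of_ne hfix⟩
    · intro hw
      refine ⟨(w : WB n).right, ?_⟩
      apply Subtype.ext
      apply SemidirectProduct.ext
      · show tauOf lst ((w : WB n).right) = (w : WB n).left
        rcases hw with ⟨hfix, hone⟩ | ⟨hne2, hfun⟩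
        · rw [tauOf_of_fix hfix, hone]
        · rw [tauOf_of_ne hne2, hfun]
      · rfl
  refine ⟨(phi lst).range, HcarrierSet, ?_, ?_⟩
  · rw [Nat.card_congr (MonoidHom.ofInjective (phi_inj lst)).toEquiv.symm]
    simp [Nat.card_eq_fintype_card, Fintype.card_perm]
  · intro g hg
    set g₀ : WD n := ConjAct.ofConjAct g with hg₀
    set τ : Signs n := ((g₀ : WB n)).left with hτ
    set ρ : Equiv.Perm (Fin n) := ((g₀ : WB n)).right with hρ
    -- the generic conjugated element attached to a transposition
    have main : ∀ x y : Fin n, ∃ w : WD n, w ∈ (phi lst).range ∧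
        (∀ j, (w : WB n).left j = τ j * τ (Equiv.swap x y j)) ∧
        (w : WB n).right = Equiv.swap x y := by
      intro x y
      set σ : Equiv.Perm (Fin n) := ρ⁻¹ * Equiv.swap x y * ρ with hσ
      have hmem : SemidirectProduct.inr σ ∈ WD n := by
        show signProd n _ = 1
        show (∏ i, (SemidirectProduct.inr σ : WB n).left i) = 1
        simp [SemidirectProduct.left_inr]
      set k : WD n := ⟨SemidirectProduct.inr σ, hmem⟩ with hk
      have hkS : k ∈ SnInWD n := ⟨σ, rfl⟩
      refine ⟨g • k, ?_, ?_, ?_⟩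
      · rw [← hg]
        exact Subgroup.smul_mem_pointwise_smul _ _ _ hkS
      all_goals
        have hwc : ((g • k : WD n) : WB n)
            = (g₀ : WB n) * SemidirectProduct.inr σ * (g₀ : WB n)⁻¹ := by
          rw [ConjAct.smul_def]
          push_cast [← hg₀]
          rfl
      · intro j
        rw [hwc, conj_inr_left]
        congr 2
        rw [hσ]
        simp [Equiv.Perm.mul_apply, mul_inv_rev, Equiv.swap_inv, ← hρ, ← hτ]
      · rw [hwc]
        simp only [SemidirectProduct.mul_right, SemidirectProduct.inv_right,
          SemidirectProduct.right_inr, hσ, ← hρ]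
        group
    by_cases hconst : ∀ a b : Fin n, a ≠ lst → b ≠ lst → τ a = τ b
    · -- τ is constant, hence conjugates of S_n have trivial sign part
      set z0 : Fin n := ⟨0, by omega⟩ with hz0
      have hz0ne : z0 ≠ lst := by
        intro h
        have h2 : (0 : ℕ) = (lst : ℕ) := congrArg Fin.val h
        omega
      have hprod : (∏ j, τ j) = 1 := g₀.2
      have hτconst : ∀ j, τ j = τ z0 := by
        have hlstz0 : τ lst = τ z0 := by
          by_contra hne2
          have hmul : τ lst * τ z0 = -1 := units_mul_eq_neg_one hne2
          have h1 : (∏ j, τ j) = τ lst * ∏ j ∈ Finset.univ.erase lst, τ j :=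
            (Finset.mul_prod_erase Finset.univ τ (Finset.mem_univ lst)).symm
          have h2 : (∏ j ∈ Finset.univ.erase lst, τ j) = τ z0 ^ (n - 1) := by
            rw [Finset.prod_congr rfl
              (fun j hj => hconst j z0 (Finset.ne_of_mem_erase hj) hz0ne)]
            rw [Finset.prod_const, Finset.card_erase_of_mem (Finset.mem_univ lst)]
            simp
          have hodd : Odd (n - 1) := Nat.Even.sub_odd (by omega) hne odd_one
          obtain ⟨m, hm⟩ := hodd
          have h3 : τ z0 ^ (n - 1) = τ z0 := by
            rw [hm, pow_add, pow_mul, sq, Int.units_mul_self, one_pow, one_mul, pow_one]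
          rw [h1, h2, h3, hmul] at hprod
          exact absurd hprod (by decide)
        intro j
        by_cases hj : j = lst
        · rw [hj, hlstz0]
        · exact hconst j z0 hj hz0ne
      obtain ⟨w, hwH, hwleft, hwright⟩ := main lst z0
      rw [← SetLike.mem_coe, HcarrierSet] at hwH
      rcases hwH with ⟨hfix, -⟩ | ⟨-, hfun⟩
      · rw [hwright, Equiv.swap_apply_left] at hfix
        exact hz0ne hfix
      · have h1 : (w : WB n).left lst = 1 := by
          rw [hwleft lst, hτconst lst, hτconst (Equiv.swap lst z0 lst), Int.units_mul_self]
        rw [congrFun hfun lst] at h1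
        simp at h1
    · push_neg at hconst
      obtain ⟨a, b, ha, hb, hab⟩ := hconst
      obtain ⟨w, hwH, hwleft, -⟩ := main a b
      have hlst1 : (w : WB n).left lst = 1 := by
        rw [hwleft lst, Equiv.swap_apply_of_ne_of_ne (Ne.symm ha) (Ne.symm hb),
          Int.units_mul_self]
      have hlsta : (w : WB n).left a = -1 := by
        rw [hwleft a, Equiv.swap_apply_left]
        exact units_mul_eq_neg_one hab
      rw [← SetLike.mem_coe, HcarrierSet] at hwH
      rcases hwH with ⟨-, hone⟩ | ⟨-, hfun⟩
      · rw [hone] at hlsta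
        simp at hlsta
      · rw [congrFun hfun lst, if_pos (Or.inl rfl)] at hlst1
        simp at hlst1
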